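/- Let X = Σ_{i=1}^{N} X_i where each X_i is a Bernoulli random variable and the dependency graph of (X_i) has maximum degree at most d (each X_i is independent of all but at most d of the others). If E[X] = μ, then Pr[X ≤ μ/2] ≤ e^{-Ω(μ/d)}. -/

import Mathlib

open MeasureTheory ProbabilityTheory
open scoped ENNReal NNReal

-- greedy coloring
lemma greedy_coloring {N d : ℕ} (D : SimpleGraph (Fin N)) [DecidableRel D.Adj]
    (hdeg : ∀ i, D.degree i ≤ d) :
    ∃ C : Fin N → Fin (d + 1), ∀ i j, D.Adj i j → C i ≠ C j := by
  classical
  suffices h : ∀ n, ∃ C : Fin N → Fin (d + 1),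
      ∀ i j : Fin N, i.val < n → j.val < n → D.Adj i j → C i ≠ C j by
    obtain ⟨C, hC⟩ := h N
    exact ⟨C, fun i j hadj => hC i j i.isLt j.isLt hadj⟩
  intro n
  induction n with
  | zero => exact ⟨fun _ => 0, fun i j hi _ _ => absurd hi (Nat.not_lt_zero _)⟩
  | succ n ih =>
    obtain ⟨C, hC⟩ := ih
    by_cases hn : n < N
    · set v : Fin N := ⟨n, hn⟩ with hv
      set used : Finset (Fin (d + 1)) :=
        ((D.neighborFinset v).filter (fun j => j.val < n)).image C with husedDef
      have hcard : used.card < d + 1 := by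
        calc used.card ≤ ((D.neighborFinset v).filter (fun j => j.val < n)).card :=
              Finset.card_image_le
          _ ≤ (D.neighborFinset v).card := Finset.card_filter_le _ _
          _ = D.degree v := rfl
          _ ≤ d := hdeg v
          _ < d + 1 := Nat.lt_succ_self d
      have hcompl : usedᶜ.Nonempty := by
        rw [← Finset.card_pos, Finset.card_compl]
        have : Fintype.card (Fin (d + 1)) = d + 1 := Fintype.card_fin _
        omega
      obtain ⟨c, hc⟩ := hcompl
      rw [Finset.mem_compl] at hc
      refine ⟨Function.update C v c, ?_⟩
      intro i j hi hj hadj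
      have hkey : ∀ w : Fin N, w.val < n → D.Adj v w → C w ∈ used := by
        intro w hw hadjw
        exact Finset.mem_image_of_mem C
          (Finset.mem_filter.mpr ⟨(SimpleGraph.mem_neighborFinset _ _ _).mpr hadjw, hw⟩)
      rcases Nat.lt_succ_iff_lt_or_eq.mp hi with hi' | hi'
      · rcases Nat.lt_succ_iff_lt_or_eq.mp hj with hj' | hj'
        · have hiv : i ≠ v := by
            intro h; rw [h] at hi'; exact absurd hi' (lt_irrefl n)
          have hjv : j ≠ v := by
            intro h; rw [h] at hj'; exact absurd hj' (lt_irrefl n)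
          rw [Function.update_of_ne hiv, Function.update_of_ne hjv]
          exact hC i j hi' hj' hadj
        · have hjv : j = v := Fin.ext hj'
          have hiv : i ≠ v := by
            intro h; rw [h] at hi'; exact absurd hi' (lt_irrefl n)
          subst hjv
          rw [Function.update_of_ne hiv, Function.update_self]
          intro h
          exact hc (h ▸ hkey i hi' hadj.symm)
      · have hiv : i = v := Fin.ext hi'
        subst hiv
        have hj' : j.val < n := by
          rcases Nat.lt_succ_iff_lt_or_eq.mp hj with hj' | hj'
          · exact hj'
          · exact absurd (Fin.ext hj' : j = v) (fun h => (D.loopless.irrefl v (h ▸ hadj)).elim)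
        have hjv : j ≠ v := by
          intro h; rw [h] at hj'; exact absurd hj' (lt_irrefl n)
        rw [Function.update_of_ne hjv, Function.update_self]
        intro h
        exact hc (h.symm ▸ hkey j hj' hadj)
    · -- n ≥ N : nothing new to color
      refine ⟨C, fun i j hi hj hadj => hC i j ?_ ?_ hadj⟩ <;> omega

-- product formula on pairwise non-adjacent finsets
lemma meas_biInter_of_pairwise {N : ℕ} {Ω : Type} [MeasurableSpace Ω] (μ : Measure Ω)
    [IsProbabilityMeasure μ] (A : Fin N → Set Ω) (hA : ∀ i, MeasurableSet (A i))
    (D : SimpleGraph (Fin N)) [DecidableRel D.Adj]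
    (hInd : ∀ (i : Fin N) (S : Finset (Fin N)), i ∉ S → (∀ j ∈ S, ¬ D.Adj i j) →
      IndepSet (A i) (⋂ j ∈ S, A j) μ)
    (T : Finset (Fin N)) (hT : ∀ i ∈ T, ∀ j ∈ T, i ≠ j → ¬ D.Adj i j) :
    μ (⋂ j ∈ T, A j) = ∏ j ∈ T, μ (A j) := by
  classical
  induction T using Finset.induction_on with
  | empty => simp
  | @insert i T hiT ih =>
    have hnonadj : ∀ j ∈ T, ¬ D.Adj i j := fun j hj =>
      hT i (Finset.mem_insert_self i T) j (Finset.mem_insert_of_mem hj)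
        (fun h => hiT (h ▸ hj))
    have hind := hInd i T hiT hnonadj
    rw [Finset.set_biInter_insert, Finset.prod_insert hiT,
      hind.measure_inter_eq_mul,
      ih (fun a ha b hb hab =>
        hT a (Finset.mem_insert_of_mem ha) b (Finset.mem_insert_of_mem hb) hab)]

lemma class_bound {N : ℕ} {Ω : Type} [MeasurableSpace Ω] (μ : Measure Ω)
    [IsProbabilityMeasure μ] (A : Fin N → Set Ω) (hA : ∀ i, MeasurableSet (A i))
    (P : Fin N → Prop) [DecidablePred P]
    (hprod : ∀ T : Finset (Fin N), (∀ i ∈ T, P i) →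
      μ (⋂ j ∈ T, A j) = ∏ j ∈ T, μ (A j)) :
    ∫⁻ ω, ENNReal.ofReal
        (Real.exp (-(∑ j : {i // P i}, (A j.1).indicator (fun _ => (1 : ℝ)) ω))) ∂μ
      ≤ ENNReal.ofReal
        (Real.exp (-((1 - Real.exp (-1)) * ∑ j : {i // P i}, (μ (A j.1)).toReal))) := by
  classical
  set a : ℝ := 1 - Real.exp (-1) with ha
  have ha0 : 0 ≤ a := by
    have := Real.exp_le_one_iff.mpr (by norm_num : (-1:ℝ) ≤ 0)
    simp only [ha]; linarith
  have ha1 : a ≤ 1 := by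
    have := (Real.exp_pos (-1)).le
    simp only [ha]; linarith
  set Y : {i // P i} → Ω → ℝ := fun j => (A j.1).indicator (fun _ => (1 : ℝ)) with hY
  have hYmeas : ∀ j, Measurable (Y j) := fun j => measurable_const.indicator (hA j.1)
  have hYnonneg : ∀ j ω, 0 ≤ Y j ω := fun j ω =>
    Set.indicator_nonneg (fun _ _ => zero_le_one) ω
  have hYint : ∀ j, Integrable (Y j) μ := fun j =>
    (integrable_const (1 : ℝ)).indicator (hA j.1)
  -- independence of the events in the class
  have hiSet : iIndepSet (fun j : {i // P i} => A j.1) μ := by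
    refine (ProbabilityTheory.iIndepSet_iff_meas_biInter (f := fun j : {i // P i} => A j.1) (fun j => hA j.1)).mpr fun s => ?_
    have himg := hprod (s.image Subtype.val)
      (by intro i hi; obtain ⟨j, _, rfl⟩ := Finset.mem_image.mp hi; exact j.2)
    rw [Finset.set_biInter_finset_image,
      Finset.prod_image (fun x _ y _ h => Subtype.ext h)] at himg
    exact himg
  have hIndep : iIndepFun Y μ :=
    hiSet.iIndepFun_indicator
  set S : Ω → ℝ := ∑ j : {i // P i}, Y j with hS
  have hSapply : ∀ ω, S ω = ∑ j : {i // P i}, Y j ω := fun ω => by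
    simp [hS, Finset.sum_apply]
  have hSnonneg : ∀ ω, 0 ≤ S ω := fun ω => by
    rw [hSapply]; exact Finset.sum_nonneg fun j _ => hYnonneg j ω
  have hSmeas : Measurable S := by
    have hfe : S = fun ω => ∑ j : {i // P i}, Y j ω := funext hSapply
    rw [hfe]; exact Finset.measurable_sum _ fun j _ => hYmeas j
  -- mgf of a single indicator at t = -1
  have hmgrf : ∀ j : {i // P i}, mgf (Y j) μ (-1) = 1 - a * (μ (A j.1)).toReal := by
    intro j
    have heq : (fun ω => Real.exp (-1 * Y j ω)) = fun ω => 1 - a * Y j ω := by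
      funext ω
      by_cases hmem : ω ∈ A j.1
      · simp [hY, Set.indicator_of_mem hmem, ha]
      · simp [hY, Set.indicator_of_notMem hmem]
    rw [mgf, heq, integral_sub (integrable_const 1) ((hYint j).const_mul a),
      integral_const, integral_const_mul, hY]
    have : ∫ ω, (A j.1).indicator (fun _ => (1 : ℝ)) ω ∂μ = (μ (A j.1)).toReal := by
      rw [integral_indicator_const (1 : ℝ) (hA j.1)]; simp; rfl
    rw [this]; simp
  -- mgf of the class sum
  have hmgfS : mgf S μ (-1) = ∏ j : {i // P i}, (1 - a * (μ (A j.1)).toReal) := by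
    rw [hS, hIndep.mgf_sum hYmeas Finset.univ]
    exact Finset.prod_congr rfl fun j _ => hmgrf j
  -- bound the product
  have hp01 : ∀ j : {i // P i}, 0 ≤ (μ (A j.1)).toReal ∧ (μ (A j.1)).toReal ≤ 1 := by
    intro j
    refine ⟨ENNReal.toReal_nonneg, ?_⟩
    have h := measure_mono (Set.subset_univ (A j.1)) (μ := μ)
    rw [measure_univ] at h
    simpa using ENNReal.toReal_mono (by norm_num) h
  have hprodbd : ∏ j : {i // P i}, (1 - a * (μ (A j.1)).toReal)
      ≤ Real.exp (-(a * ∑ j : {i // P i}, (μ (A j.1)).toReal)) := by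
    rw [Finset.mul_sum, ← Finset.sum_neg_distrib, Real.exp_sum]
    refine Finset.prod_le_prod (fun j _ => ?_) (fun j _ => ?_)
    · nlinarith [(hp01 j).1, (hp01 j).2, ha0, ha1]
    · have := Real.add_one_le_exp (-(a * (μ (A j.1)).toReal))
      linarith
  -- convert to lintegral
  have hint : Integrable (fun ω => Real.exp (-S ω)) μ := by
    refine Integrable.mono' (integrable_const (1 : ℝ))
      (hSmeas.neg.exp.aestronglyMeasurable) (ae_of_all μ fun ω => ?_)
    rw [Real.norm_eq_abs, abs_of_pos (Real.exp_pos _)]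
    calc Real.exp (-S ω) ≤ Real.exp 0 :=
          Real.exp_le_exp.mpr (neg_nonpos.mpr (hSnonneg ω))
      _ = 1 := Real.exp_zero
  have hlint : ∫⁻ ω, ENNReal.ofReal (Real.exp (-S ω)) ∂μ
      = ENNReal.ofReal (mgf S μ (-1)) := by
    rw [← MeasureTheory.ofReal_integral_eq_lintegral_ofReal hint
      (ae_of_all μ fun ω => (Real.exp_pos _).le)]
    congr 1
    rw [mgf]
    exact integral_congr_ae (ae_of_all μ fun ω => by simp only [neg_one_mul])
  calc ∫⁻ ω, ENNReal.ofReal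
        (Real.exp (-(∑ j : {i // P i}, (A j.1).indicator (fun _ => (1 : ℝ)) ω))) ∂μ
      = ∫⁻ ω, ENNReal.ofReal (Real.exp (-S ω)) ∂μ := by
        refine lintegral_congr fun ω => ?_
        rw [hSapply]
    _ = ENNReal.ofReal (mgf S μ (-1)) := hlint
    _ ≤ ENNReal.ofReal (Real.exp (-(a * ∑ j : {i // P i}, (μ (A j.1)).toReal))) := by
        rw [hmgfS]; exact ENNReal.ofReal_le_ofReal hprodbd

/-- Chernoff bound under bounded dependence. Let `X = Σ_i X_i` where
`X_i` is the indicator of the event `A i`, and suppose there is a dependency graph `D`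
of maximum degree at most `d`: each `A i` is independent of the family of events at
its non-neighbors. If `E[X] = μX`, then `Pr[X ≤ μX / 2] ≤ exp (-Ω(μX / d))`. -/
theorem chernoff_bounded_dependence :
    ∃ c : ℝ, 0 < c ∧
      ∀ (N d : ℕ), 1 ≤ d →
      ∀ (Ω : Type) [MeasurableSpace Ω] (μ : Measure Ω) [IsProbabilityMeasure μ]
        (A : Fin N → Set Ω), (∀ i, MeasurableSet (A i)) →
      ∀ (D : SimpleGraph (Fin N)) [DecidableRel D.Adj],
        (∀ i, D.degree i ≤ d) →
        (∀ (i : Fin N) (S : Finset (Fin N)), i ∉ S → (∀ j ∈ S, ¬ D.Adj i j) →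
          IndepSet (A i) (⋂ j ∈ S, A j) μ) →
        μ {ω | ∑ i, (A i).indicator (fun _ => (1 : ℝ)) ω
                 ≤ (∑ i, (μ (A i)).toReal) / 2}
          ≤ ENNReal.ofReal (Real.exp (-(c * (∑ i, (μ (A i)).toReal) / d))) := by
  refine ⟨1/16, by norm_num, ?_⟩
  intro N d hd Ω _ μ _ A hA D _ hdeg hInd
  classical
  obtain ⟨C, hC⟩ := greedy_coloring D hdeg
  have class_bound' : ∀ k : Fin (d+1),
      ∫⁻ ω, ENNReal.ofReal
        (Real.exp (-(∑ j : {i // C i = k}, (A j.1).indicator (fun _ => (1 : ℝ)) ω))) ∂μ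
      ≤ ENNReal.ofReal
        (Real.exp (-((1 - Real.exp (-1)) * ∑ j : {i // C i = k}, (μ (A j.1)).toReal))) := by
    intro k
    have hprod : ∀ T : Finset (Fin N), (∀ i ∈ T, C i = k) →
        μ (⋂ j ∈ T, A j) = ∏ j ∈ T, μ (A j) := by
      intro T hTk
      refine meas_biInter_of_pairwise μ A hA D hInd T ?_
      intro i hi j hj hij hadj
      exact hC i j hadj (by rw [hTk i hi, hTk j hj])
    exact class_bound μ A hA (fun i => C i = k) hprod

  classical
  set M : ℝ := ∑ i, (μ (A i)).toReal with hM
  have hM0 : 0 ≤ M := Finset.sum_nonneg fun i _ => ENNReal.toReal_nonneg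
  set f : Fin N → Ω → ℝ := fun i => (A i).indicator (fun _ => (1 : ℝ)) with hf
  have hfmeas : ∀ i, Measurable (f i) := fun i => measurable_const.indicator (hA i)
  set X : Ω → ℝ := fun ω => ∑ i, f i ω with hX
  have hXmeas : Measurable X := Finset.measurable_sum _ fun i _ => hfmeas i
  set mR : ℝ := (d : ℝ) + 1 with hmR
  have hdR : (1 : ℝ) ≤ (d : ℝ) := by exact_mod_cast hd
  have hdpos : (0 : ℝ) < (d : ℝ) := by linarith
  have hmpos : 0 < mR := by rw [hmR]; linarith
  set S : Fin (d + 1) → Ω → ℝ := fun k ω => ∑ j : {i // C i = k}, f j.1 ω with hS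
  have hSmeas : ∀ k, Measurable (S k) := fun k =>
    Finset.measurable_sum _ fun j _ => hfmeas j.1
  have hSX : ∀ ω, ∑ k, S k ω = X ω := fun ω =>
    Fintype.sum_fiberwise C (fun i => f i ω)
  set Mk : Fin (d + 1) → ℝ := fun k => ∑ j : {i // C i = k}, (μ (A j.1)).toReal with hMk
  have hMkM : ∑ k, Mk k = M := Fintype.sum_fiberwise C (fun i => (μ (A i)).toReal)
  set a : ℝ := 1 - Real.exp (-1) with ha
  have hclass : ∀ k, ∫⁻ ω, ENNReal.ofReal (Real.exp (-(S k ω))) ∂μ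
      ≤ ENNReal.ofReal (Real.exp (-(a * Mk k))) := class_bound'
  set E : Set Ω := {ω | X ω ≤ M / 2} with hE
  -- step 1 : Markov
  have hGmeas : Measurable fun ω => ENNReal.ofReal (Real.exp (-(X ω) * mR⁻¹)) :=
    ((hXmeas.neg.mul_const _).exp).ennreal_ofReal
  have hmono : ∀ ω ∈ E, (1 : ℝ≥0∞)
      ≤ ENNReal.ofReal (Real.exp (M / (2 * mR)) * Real.exp (-(X ω) * mR⁻¹)) := by
    intro ω hω
    rw [← Real.exp_add]
    refine ENNReal.one_le_ofReal.mpr (Real.one_le_exp ?_)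
    have hXω : X ω ≤ M / 2 := hω
    have heq : M / (2 * mR) = M / 2 * mR⁻¹ := by
      rw [div_mul_eq_div_div, div_eq_mul_inv]
    have h1 : -(X ω) * mR⁻¹ ≥ -(M / 2) * mR⁻¹ :=
      mul_le_mul_of_nonneg_right (neg_le_neg hXω) (inv_nonneg.mpr hmpos.le)
    rw [heq]
    nlinarith [h1]
  have step1 : μ E ≤ ENNReal.ofReal (Real.exp (M / (2 * mR)))
      * ∫⁻ ω, ENNReal.ofReal (Real.exp (-(X ω) * mR⁻¹)) ∂μ := by
    rw [← lintegral_const_mul _ hGmeas]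
    calc μ E = ∫⁻ _ω in E, 1 ∂μ := (setLIntegral_one E).symm
      _ ≤ ∫⁻ ω in E, ENNReal.ofReal (Real.exp (M / (2 * mR)))
            * ENNReal.ofReal (Real.exp (-(X ω) * mR⁻¹)) ∂μ := by
          refine setLIntegral_mono (measurable_const.mul hGmeas) fun ω hω => ?_
          rw [← ENNReal.ofReal_mul (Real.exp_pos _).le]
          exact hmono ω hω
      _ ≤ ∫⁻ ω, ENNReal.ofReal (Real.exp (M / (2 * mR)))
            * ENNReal.ofReal (Real.exp (-(X ω) * mR⁻¹)) ∂μ :=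
          setLIntegral_le_lintegral _ _
  -- pointwise product decomposition
  have hpt : ∀ ω, ENNReal.ofReal (Real.exp (-(X ω) * mR⁻¹))
      = ∏ k : Fin (d + 1), (ENNReal.ofReal (Real.exp (-(S k ω)))) ^ (mR⁻¹ : ℝ) := by
    intro ω
    have hterm : ∀ k : Fin (d + 1), (ENNReal.ofReal (Real.exp (-(S k ω)))) ^ (mR⁻¹ : ℝ)
        = ENNReal.ofReal (Real.exp (-(S k ω) * mR⁻¹)) := by
      intro k
      rw [ENNReal.ofReal_rpow_of_pos (Real.exp_pos _), ← Real.exp_mul]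
    rw [Finset.prod_congr rfl (fun k _ => hterm k),
      ← ENNReal.ofReal_prod_of_nonneg (fun k _ => (Real.exp_pos _).le),
      ← Real.exp_sum, ← Finset.sum_mul]
    congr 1
    rw [Finset.sum_neg_distrib, hSX ω]
  -- Hölder
  have step2 : ∫⁻ ω, ENNReal.ofReal (Real.exp (-(X ω) * mR⁻¹)) ∂μ
      ≤ ∏ k : Fin (d + 1),
          (∫⁻ ω, ENNReal.ofReal (Real.exp (-(S k ω))) ∂μ) ^ (mR⁻¹ : ℝ) := by
    have hsum : ∑ _k : Fin (d + 1), (mR⁻¹ : ℝ) = 1 := by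
      rw [Finset.sum_const, Finset.card_univ, Fintype.card_fin, nsmul_eq_mul, hmR]
      push_cast
      field_simp
    have hH := ENNReal.lintegral_prod_norm_pow_le (μ := μ) Finset.univ
      (f := fun k ω => ENNReal.ofReal (Real.exp (-(S k ω))))
      (fun k _ => (((hSmeas k).neg.exp).ennreal_ofReal).aemeasurable)
      (p := fun _ => (mR⁻¹ : ℝ)) hsum (fun _ _ => inv_nonneg.mpr hmpos.le)
    calc ∫⁻ ω, ENNReal.ofReal (Real.exp (-(X ω) * mR⁻¹)) ∂μ
        = ∫⁻ ω, ∏ k : Fin (d + 1),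
            (ENNReal.ofReal (Real.exp (-(S k ω)))) ^ (mR⁻¹ : ℝ) ∂μ :=
          lintegral_congr fun ω => hpt ω
      _ ≤ _ := hH
  -- per class
  have step3 : ∏ k : Fin (d + 1),
        (∫⁻ ω, ENNReal.ofReal (Real.exp (-(S k ω))) ∂μ) ^ (mR⁻¹ : ℝ)
      ≤ ENNReal.ofReal (Real.exp (-(a * M) * mR⁻¹)) := by
    calc ∏ k : Fin (d + 1),
          (∫⁻ ω, ENNReal.ofReal (Real.exp (-(S k ω))) ∂μ) ^ (mR⁻¹ : ℝ)
        ≤ ∏ k : Fin (d + 1),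
            (ENNReal.ofReal (Real.exp (-(a * Mk k)))) ^ (mR⁻¹ : ℝ) :=
          Finset.prod_le_prod' fun k _ =>
            ENNReal.rpow_le_rpow (hclass k) (inv_nonneg.mpr hmpos.le)
      _ = ∏ k : Fin (d + 1), ENNReal.ofReal (Real.exp (-(a * Mk k) * mR⁻¹)) := by
          refine Finset.prod_congr rfl fun k _ => ?_
          rw [ENNReal.ofReal_rpow_of_pos (Real.exp_pos _), ← Real.exp_mul]
      _ = ENNReal.ofReal (Real.exp (-(a * M) * mR⁻¹)) := by
          rw [← ENNReal.ofReal_prod_of_nonneg (fun k _ => (Real.exp_pos _).le),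
            ← Real.exp_sum, ← Finset.sum_mul]
          congr 2
          rw [Finset.sum_neg_distrib, ← Finset.mul_sum, hMkM]
  -- numeric
  have hmul : Real.exp (-1) * Real.exp 1 = 1 := by
    rw [← Real.exp_add]; norm_num
  have he1 : Real.exp (-1) < 3 / 8 := by
    nlinarith [hmul, Real.exp_one_gt_d9, (Real.exp_pos (-1)).le]
  have hnum : M / (2 * mR) + -(a * M) * mR⁻¹ ≤ -(1 / 16 * M / (d : ℝ)) := by
    have e1 : M / (2 * mR) + -(a * M) * mR⁻¹ = (1 / 2 - a) * M / mR := by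
      field_simp
      ring
    rw [e1, neg_div' , div_le_div_iff₀ hmpos hdpos, hmR, ha]
    nlinarith [mul_nonneg hM0 (sub_nonneg.mpr hdR), mul_nonneg hM0 (by linarith : (0:ℝ) ≤ (d:ℝ)), he1,
      mul_nonneg hM0 (by linarith : (0:ℝ) ≤ (d:ℝ) - 1), hM0]
  -- combine
  show μ E ≤ ENNReal.ofReal (Real.exp (-(1 / 16 * M / (d : ℝ))))
  calc μ E ≤ ENNReal.ofReal (Real.exp (M / (2 * mR)))
        * ∫⁻ ω, ENNReal.ofReal (Real.exp (-(X ω) * mR⁻¹)) ∂μ := step1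
    _ ≤ ENNReal.ofReal (Real.exp (M / (2 * mR)))
        * ENNReal.ofReal (Real.exp (-(a * M) * mR⁻¹)) :=
        mul_le_mul_right (step2.trans step3) _
    _ = ENNReal.ofReal (Real.exp (M / (2 * mR)) * Real.exp (-(a * M) * mR⁻¹)) :=
        (ENNReal.ofReal_mul (Real.exp_pos _).le).symm
    _ = ENNReal.ofReal (Real.exp (M / (2 * mR) + -(a * M) * mR⁻¹)) := by
        rw [← Real.exp_add]
    _ ≤ ENNReal.ofReal (Real.exp (-(1 / 16 * M / (d : ℝ)))) :=
        ENNReal.ofReal_le_ofReal (Real.exp_le_exp.mpr hnum)
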